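/- Let S and A be nonempty finite types, γ ≥ 0. Let u⁺, u⁻ : ℝ → ℝ₊ with u⁺(x) = 0 for x ≤ 0 and u⁺ nondecreasing, u⁻(x) = 0 for x ≥ 0 and u⁻ nonincreasing, and let w⁺, w⁻ : [0,1] → [0,1] be nondecreasing with w⁺(0) = w⁻(0) = 0 and w⁺(1) = w⁻(1) = 1. Let P : S → A → S → ℝ satisfy P s a s' ≥ 0 and ∑_{s'} P s a s' = 1; let π : S → A → ℝ satisfy π s a ≥ 0 and ∑_a π s a = 1; and let r : S → A → ℝ. For Q : S → A → ℝ define (T_π Q)(s,a) as the CPT-value, under the probability distribution s' ↦ P s a s' on S, of the function g(s') := r s a + γ·∑_{a'} π s' a' · Q s' a': (T_π Q)(s,a) := ∫₀^∞ w⁺( ∑_{s' : u⁺(g s') > z} P s a s' ) dz − ∫₀^∞ w⁻( ∑_{s' : u⁻(g s') > z} P s a s' ) dz. If Q¹ s a ≤ Q² s a for all (s,a), then (T_π Q¹)(s,a) ≤ (T_π Q²)(s,a) for all (s,a). -/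

import Mathlib

open MeasureTheory Classical

section Aux
variable {S : Type*} [Fintype S]

/-- The tail-probability step function. -/
noncomputable def cptF (c p : S → ℝ) (z : ℝ) : ℝ :=
  ∑ s' : S, if z < c s' then p s' else 0

lemma cptF_antitone (c p : S → ℝ) (hp : ∀ s', 0 ≤ p s') : Antitone (cptF c p) := by
  intro z₁ z₂ h
  refine Finset.sum_le_sum fun s' _ => ?_
  by_cases h2 : z₂ < c s'
  · simp [h2, lt_of_le_of_lt h h2]
  · simp only [h2, if_false]
    split <;> simp [hp s']

lemma cptF_mem (c p : S → ℝ) (hp : ∀ s', 0 ≤ p s') (hp1 : ∑ s', p s' = 1) (z : ℝ) :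
    cptF c p z ∈ Set.Icc (0:ℝ) 1 := by
  constructor
  · exact Finset.sum_nonneg fun s' _ => by split <;> simp [hp s']
  · rw [← hp1]
    exact Finset.sum_le_sum fun s' _ => by split <;> simp [hp s']

lemma cptF_zero (c p : S → ℝ) (hc : ∀ s', 0 ≤ c s') {z : ℝ}
    (hz : (∑ s', c s') < z) : cptF c p z = 0 := by
  refine Finset.sum_eq_zero fun s' _ => ?_
  have : c s' ≤ ∑ t, c t := Finset.single_le_sum (fun t _ => hc t) (Finset.mem_univ s')
  simp [not_lt.mpr (this.trans hz.le)]

lemma cpt_integrable (c p : S → ℝ) (hc : ∀ s', 0 ≤ c s')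
    (hp : ∀ s', 0 ≤ p s') (hp1 : ∑ s', p s' = 1)
    (w : ℝ → ℝ) (hw : MonotoneOn w (Set.Icc 0 1)) (hw0 : w 0 = 0) :
    IntegrableOn (fun z => w (cptF c p z)) (Set.Ioi (0:ℝ)) := by
  set M : ℝ := ∑ s', c s' with hM
  have hM0 : 0 ≤ M := Finset.sum_nonneg fun s' _ => hc s'
  have hanti : AntitoneOn (fun z => w (cptF c p z)) (Set.Icc 0 M) := by
    intro z₁ _ z₂ _ h
    exact hw (cptF_mem c p hp hp1 z₂) (cptF_mem c p hp hp1 z₁)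
      (cptF_antitone c p hp h)
  have h1 : IntegrableOn (fun z => w (cptF c p z)) (Set.Ioc 0 M) :=
    (AntitoneOn.integrableOn_isCompact isCompact_Icc hanti).mono_set Set.Ioc_subset_Icc_self
  have h2 : IntegrableOn (fun z => w (cptF c p z)) (Set.Ioi M) := by
    refine (integrableOn_congr_fun (g := fun _ => (0:ℝ)) ?_ measurableSet_Ioi).mpr
      ((integrableOn_const_iff (C := (0:ℝ))).mpr (Or.inl (by simp)))
    intro z hz
    show w (cptF c p z) = 0
    rw [cptF_zero c p hc hz, hw0]
  have := h1.union h2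
  rwa [Set.Ioc_union_Ioi_eq_Ioi hM0] at this

lemma cpt_integral_mono (c₁ c₂ p : S → ℝ) (hc : ∀ s', c₁ s' ≤ c₂ s')
    (hc1 : ∀ s', 0 ≤ c₁ s') (hc2 : ∀ s', 0 ≤ c₂ s')
    (hp : ∀ s', 0 ≤ p s') (hp1 : ∑ s', p s' = 1)
    (w : ℝ → ℝ) (hw : MonotoneOn w (Set.Icc 0 1)) (hw0 : w 0 = 0) :
    ∫ z in Set.Ioi (0:ℝ), w (cptF c₁ p z) ≤ ∫ z in Set.Ioi (0:ℝ), w (cptF c₂ p z) := by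
  refine setIntegral_mono_on (cpt_integrable c₁ p hc1 hp hp1 w hw hw0)
    (cpt_integrable c₂ p hc2 hp hp1 w hw hw0) measurableSet_Ioi fun z _ => ?_
  refine hw (cptF_mem c₁ p hp hp1 z) (cptF_mem c₂ p hp hp1 z) ?_
  refine Finset.sum_le_sum fun s' _ => ?_
  by_cases h1 : z < c₁ s'
  · simp [h1, lt_of_lt_of_le h1 (hc s')]
  · simp only [h1, if_false]; split <;> simp [hp s']

end Aux

/-- The CPT-Q-iteration operator `(T_π Q)(s,a)`: the CPT-value, under the probability
distribution `s' ↦ P s a s'` on `S`, of `g(s') := r s a + γ·∑_{a'} π s' a' · Q s' a'`. -/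
noncomputable def cptTpi {S A : Type*} [Fintype S] [Fintype A]
    (γ : ℝ) (uPos uNeg wPos wNeg : ℝ → ℝ)
    (P : S → A → S → ℝ) (π : S → A → ℝ) (r : S → A → ℝ)
    (Q : S → A → ℝ) (s : S) (a : A) : ℝ :=
  (∫ z in Set.Ioi (0 : ℝ),
      wPos (∑ s' : S,
        if z < uPos (r s a + γ * ∑ a' : A, π s' a' * Q s' a') then P s a s' else 0)) -
    ∫ z in Set.Ioi (0 : ℝ),
      wNeg (∑ s' : S,
        if z < uNeg (r s a + γ * ∑ a' : A, π s' a' * Q s' a') then P s a s' else 0)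

/-- Monotonicity of the CPT-Q-iteration operator (Proposition 1): if `Q¹ ≤ Q²` pointwise,
then `(T_π Q¹)(s,a) ≤ (T_π Q²)(s,a)` for all `(s,a)`. -/
theorem cptTpi_mono {S A : Type*} [Fintype S] [Fintype A] [Nonempty S] [Nonempty A]
    (γ : ℝ) (hγ : 0 ≤ γ)
    (uPos uNeg wPos wNeg : ℝ → ℝ)
    (huPosNonneg : ∀ x, 0 ≤ uPos x) (huPosZero : ∀ x ≤ (0 : ℝ), uPos x = 0)
    (huPosMono : Monotone uPos)
    (huNegNonneg : ∀ x, 0 ≤ uNeg x) (huNegZero : ∀ x, (0 : ℝ) ≤ x → uNeg x = 0)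
    (huNegAnti : Antitone uNeg)
    (hwPosMono : MonotoneOn wPos (Set.Icc 0 1)) (hwPos0 : wPos 0 = 0) (hwPos1 : wPos 1 = 1)
    (hwNegMono : MonotoneOn wNeg (Set.Icc 0 1)) (hwNeg0 : wNeg 0 = 0) (hwNeg1 : wNeg 1 = 1)
    (P : S → A → S → ℝ) (hP0 : ∀ s a s', 0 ≤ P s a s') (hP1 : ∀ s a, ∑ s', P s a s' = 1)
    (π : S → A → ℝ) (hπ0 : ∀ s a, 0 ≤ π s a) (hπ1 : ∀ s, ∑ a, π s a = 1)
    (r : S → A → ℝ)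
    (Q₁ Q₂ : S → A → ℝ) (hQ : ∀ s a, Q₁ s a ≤ Q₂ s a) :
    ∀ s a, cptTpi γ uPos uNeg wPos wNeg P π r Q₁ s a
            ≤ cptTpi γ uPos uNeg wPos wNeg P π r Q₂ s a := by
  intro s a
  set p : S → ℝ := P s a with hp
  set g₁ : S → ℝ := fun s' => r s a + γ * ∑ a' : A, π s' a' * Q₁ s' a' with hg₁
  set g₂ : S → ℝ := fun s' => r s a + γ * ∑ a' : A, π s' a' * Q₂ s' a' with hg₂
  have hg : ∀ s', g₁ s' ≤ g₂ s' := by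
    intro s'
    refine add_le_add_right (mul_le_mul_of_nonneg_left ?_ hγ) _
    exact Finset.sum_le_sum fun a' _ =>
      mul_le_mul_of_nonneg_left (hQ s' a') (hπ0 s' a')
  have hpos : ∫ z in Set.Ioi (0:ℝ), wPos (cptF (fun s' => uPos (g₁ s')) p z)
      ≤ ∫ z in Set.Ioi (0:ℝ), wPos (cptF (fun s' => uPos (g₂ s')) p z) :=
    cpt_integral_mono _ _ p (fun s' => huPosMono (hg s'))
      (fun s' => huPosNonneg _) (fun s' => huPosNonneg _)
      (fun s' => hP0 s a s') (hP1 s a) wPos hwPosMono hwPos0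
  have hneg : ∫ z in Set.Ioi (0:ℝ), wNeg (cptF (fun s' => uNeg (g₂ s')) p z)
      ≤ ∫ z in Set.Ioi (0:ℝ), wNeg (cptF (fun s' => uNeg (g₁ s')) p z) :=
    cpt_integral_mono _ _ p (fun s' => huNegAnti (hg s'))
      (fun s' => huNegNonneg _) (fun s' => huNegNonneg _)
      (fun s' => hP0 s a s') (hP1 s a) wNeg hwNegMono hwNeg0
  exact sub_le_sub hpos hneg
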